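/- arXiv:1412.1754 — 7 statements merged into one kernel-verified Lean document; each statement's English description precedes it below -/
import Mathlib

section
/- For real parameters a, b with 0 < b < a, the polynomial equation 3s^8 - 4(a^2+b^2)s^6 + 6a^2b^2 s^4 - a^4 b^4 = 0 has exactly one root s in the open interval (a, +∞). -/
theorem stmt_0 (a b : ℝ) (hb : 0 < b) (hba : b < a) :
    ∃! s : ℝ, s ∈ Set.Ioi a ∧
      3*s^8 - 4*(a^2+b^2)*s^6 + 6*a^2*b^2*s^4 - a^4*b^4 = 0 := by
  have ha : 0 < a := hb.trans hba
  set f : ℝ → ℝ := fun s => 3*s^8 - 4*(a^2+b^2)*s^6 + 6*a^2*b^2*s^4 - a^4*b^4 with hf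
  have hderiv : ∀ x : ℝ, HasDerivAt f (24*x^3*(x^2-a^2)*(x^2-b^2)) x := by
    intro x
    have h8 := (hasDerivAt_pow 8 x).const_mul (3:ℝ)
    have h6 := (hasDerivAt_pow 6 x).const_mul (4*(a^2+b^2))
    have h4 := (hasDerivAt_pow 4 x).const_mul (6*a^2*b^2)
    have := ((h8.sub h6).add h4).sub_const (a^4*b^4)
    refine this.congr_deriv ?_
    push_cast
    ring
  have hcont : Continuous f := by
    fun_prop
  have hmono : StrictMonoOn f (Set.Ici a) := by
    apply strictMonoOn_of_deriv_pos (convex_Ici a) hcont.continuousOn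
    intro x hx
    rw [interior_Ici] at hx
    rw [(hderiv x).deriv]
    have hxa : a < x := hx
    have hx0 : 0 < x := ha.trans hxa
    have h1 : 0 < x^2 - a^2 := by nlinarith
    have h2 : 0 < x^2 - b^2 := by nlinarith
    positivity
  have hfa : f a < 0 := by
    have : f a = -(a^4*(a^2-b^2)^2) := by simp only [hf]; ring
    rw [this, neg_lt_zero]
    have h2 : 0 < a^2 - b^2 := by nlinarith
    positivity
  -- choose a large N with f N > 0
  set N : ℝ := a + 4*(a^2+b^2) + a^2*b^2 + 1 with hN
  have haN : a < N := by nlinarith [sq_nonneg a, sq_nonneg b, sq_nonneg (a*b)]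
  have hN1 : (1:ℝ) ≤ N := by nlinarith [sq_nonneg a, sq_nonneg b, sq_nonneg (a*b)]
  have hNc : 4*(a^2+b^2) ≤ N := by nlinarith [sq_nonneg (a*b)]
  have hNd : a^2*b^2 + 1 ≤ N := by nlinarith [sq_nonneg a, sq_nonneg b]
  have hN2 : 4*(a^2+b^2) ≤ N^2 := le_trans hNc (by nlinarith)
  have hN4 : a^2*b^2 + 1 ≤ N^4 := le_trans hNd (le_self_pow₀ hN1 (by norm_num))
  have hfN : 0 < f N := by
    simp only [hf]
    have hN0 : (0:ℝ) < N := lt_of_lt_of_le one_pos hN1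
    have h6 : (0:ℝ) ≤ N^6 := by positivity
    have h4 : (0:ℝ) ≤ N^4 := by positivity
    have hd : (0:ℝ) ≤ a^2*b^2 := by positivity
    linarith [mul_le_mul_of_nonneg_left hN2 h6, mul_le_mul_of_nonneg_left hN4 h4,
      mul_le_mul_of_nonneg_left hN4 hd, sq_nonneg (N^4 - a^2*b^2), mul_nonneg hd h4]
  obtain ⟨s, hs, hfs⟩ := intermediate_value_Ioo (le_of_lt haN) hcont.continuousOn
    (show (0:ℝ) ∈ Set.Ioo (f a) (f N) from ⟨hfa, hfN⟩)
  refine ⟨s, ⟨hs.1, hfs⟩, ?_⟩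
  rintro t ⟨ht, hft⟩
  exact hmono.injOn (Set.mem_Ici.mpr (le_of_lt ht)) (Set.mem_Ici.mpr (le_of_lt hs.1)) (by rw [hfs]; exact hft)
end

section
/- For 0 < b < a, the equation √((s²−a²)(s²−b²))/s = √(s²−b²) − √(s²−a²) has a unique solution s in (a, +∞), and this solution coincides with the unique root in (a,+∞) of 3s^8 − 4(a²+b²)s^6 + 6a²b²s^4 − a⁴b⁴ = 0. -/
lemma sq_iff_aux {x y : ℝ} (hx : 0 ≤ x) (hy : 0 ≤ y) : x = y ↔ x^2 = y^2 :=
  ⟨fun h => by rw [h], fun h => by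
    rw [← Real.sqrt_sq hx, ← Real.sqrt_sq hy, h]⟩

theorem stmt_1 (a b : ℝ) (hb : 0 < b) (hba : b < a) :
    (∃! s : ℝ, s ∈ Set.Ioi a ∧
      Real.sqrt ((s^2-a^2)*(s^2-b^2)) / s
        = Real.sqrt (s^2-b^2) - Real.sqrt (s^2-a^2)) ∧
    (∀ s ∈ Set.Ioi a,
      (Real.sqrt ((s^2-a^2)*(s^2-b^2)) / s
        = Real.sqrt (s^2-b^2) - Real.sqrt (s^2-a^2))
      ↔ 3*s^8 - 4*(a^2+b^2)*s^6 + 6*a^2*b^2*s^4 - a^4*b^4 = 0) := by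
  have ha : 0 < a := hb.trans hba
  -- key equivalence
  have key : ∀ s ∈ Set.Ioi a,
      (Real.sqrt ((s^2-a^2)*(s^2-b^2)) / s
        = Real.sqrt (s^2-b^2) - Real.sqrt (s^2-a^2))
      ↔ 3*s^8 - 4*(a^2+b^2)*s^6 + 6*a^2*b^2*s^4 - a^4*b^4 = 0 := by
    intro s hs
    rw [Set.mem_Ioi] at hs
    have hs0 : 0 < s := ha.trans hs
    have hsa : (0:ℝ) ≤ s^2 - a^2 := by nlinarith
    have hsb : (0:ℝ) ≤ s^2 - b^2 := by nlinarith
    have hab1 : a*b < s^2 := by nlinarith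
    have hs4 : a^2*b^2 < s^4 := by nlinarith [mul_pos ha hb]
    set u := Real.sqrt (s^2-a^2) with hu
    set v := Real.sqrt (s^2-b^2) with hv
    have hu0 : 0 ≤ u := Real.sqrt_nonneg _
    have hv0 : 0 ≤ v := Real.sqrt_nonneg _
    have hu2 : u^2 = s^2 - a^2 := Real.sq_sqrt hsa
    have hv2 : v^2 = s^2 - b^2 := Real.sq_sqrt hsb
    have huv : u ≤ v := Real.sqrt_le_sqrt (by nlinarith)
    have hP : Real.sqrt ((s^2-a^2)*(s^2-b^2)) = u * v := Real.sqrt_mul hsa _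
    have h3 : (u*v)^2 = (s^2-a^2)*(s^2-b^2) := by
      linear_combination v^2*hu2 + (s^2-a^2)*hv2
    rw [hP, div_eq_iff hs0.ne']
    constructor
    · intro h
      have h2 : (u*v)^2 = ((v-u)*s)^2 := by rw [h]
      have h4 : 2*s^2*(u*v) = s^4 - a^2*b^2 := by
        linear_combination h2 - h3 + s^2*hu2 + s^2*hv2
      have h5 : (2*s^2*(u*v))^2 = (s^4 - a^2*b^2)^2 := by rw [h4]
      linear_combination h5 - 4*s^4*h3
    · intro h
      have h6 : (2*s^2*(u*v))^2 = (s^4 - a^2*b^2)^2 := by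
        linear_combination h + 4*s^4*h3
      have h4 : 2*s^2*(u*v) = s^4 - a^2*b^2 := by
        rw [sq_iff_aux (by positivity) (by linarith)]
        exact h6
      rw [sq_iff_aux (mul_nonneg hu0 hv0)
        (mul_nonneg (sub_nonneg.2 huv) hs0.le)]
      linear_combination h3 - s^2*hu2 - s^2*hv2 + h4
  -- the polynomial
  set q : ℝ → ℝ := fun s => 3*s^8 - 4*(a^2+b^2)*s^6 + 6*a^2*b^2*s^4 - a^4*b^4
    with hqdef
  have hcont : Continuous q := by fun_prop
  have hderiv : ∀ s : ℝ, HasDerivAt q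
      (3*(8*s^7) - 4*(a^2+b^2)*(6*s^5) + 6*a^2*b^2*(4*s^3)) s := by
    intro s
    have h := ((((hasDerivAt_pow 8 s).const_mul 3).sub
      ((hasDerivAt_pow 6 s).const_mul (4*(a^2+b^2)))).add
      ((hasDerivAt_pow 4 s).const_mul (6*(a^2*b^2)))).sub_const (a^4*b^4)
    exact (h.congr_deriv (by rw [show (8:ℕ)-1 = 7 from rfl, show (6:ℕ)-1 = 5 from rfl, show (4:ℕ)-1 = 3 from rfl]; push_cast; ring)).congr_of_eventuallyEq
      (Filter.Eventually.of_forall fun x => by simp only [hqdef, Pi.add_apply, Pi.sub_apply]; ring)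
  have hmono : StrictMonoOn q (Set.Ici a) := by
    apply strictMonoOn_of_deriv_pos (convex_Ici a) hcont.continuousOn
    intro x hx
    rw [interior_Ici, Set.mem_Ioi] at hx
    have hx0 : 0 < x := ha.trans hx
    rw [(hderiv x).deriv]
    have e : 3*(8*x^7) - 4*(a^2+b^2)*(6*x^5) + 6*a^2*b^2*(4*x^3)
        = 24*x^3*((x^2-a^2)*(x^2-b^2)) := by ring
    rw [e]
    have h1 : (0:ℝ) < x^2 - a^2 := by nlinarith
    have h2 : (0:ℝ) < x^2 - b^2 := by nlinarith
    positivity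
  -- endpoints
  have hqa : q a < 0 := by
    have h1 : (0:ℝ) < a^2 - b^2 := by nlinarith
    have h2 : (0:ℝ) < a^4 * (a^2-b^2)^2 := by positivity
    have h3 : q a = -(a^4 * (a^2-b^2)^2) := by simp only [hqdef]; ring
    rw [h3]; linarith
  set t := 2*(a+b) with htdef
  have hat : a < t := by nlinarith
  have hqt : 0 < q t := by
    have h1 : 4*(a^2+b^2) ≤ t^2 := by nlinarith [mul_pos ha hb]
    have h2 : a*b < t^2 := by nlinarith [mul_pos ha hb]
    have h3 : a^2*b^2 < t^4 := by nlinarith [mul_pos ha hb]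
    have h4 : a^4*b^4 < t^8 := by
      nlinarith [mul_pos (mul_pos ha hb) (mul_pos ha hb), pow_pos (show (0:ℝ) < t by nlinarith) 4]
    have h5 : 0 ≤ t^6 := by positivity
    show (0:ℝ) < 3*t^8 - 4*(a^2+b^2)*t^6 + 6*a^2*b^2*t^4 - a^4*b^4
    nlinarith [mul_le_mul_of_nonneg_right h1 h5,
      mul_nonneg (mul_nonneg (sq_nonneg a) (sq_nonneg b)) (pow_nonneg (le_of_lt (show (0:ℝ) < t by nlinarith)) 4)]
  -- root via IVT
  obtain ⟨s₀, hs₀mem, hs₀root⟩ : ∃ s₀ ∈ Set.Ioo a t, q s₀ = 0 := by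
    have := intermediate_value_Ioo (le_of_lt hat) hcont.continuousOn
      (show (0:ℝ) ∈ Set.Ioo (q a) (q t) from ⟨hqa, hqt⟩)
    obtain ⟨s₀, hmem, heq⟩ := this
    exact ⟨s₀, hmem, heq⟩
  have hs₀Ioi : s₀ ∈ Set.Ioi a := hs₀mem.1
  refine ⟨⟨s₀, ⟨hs₀Ioi, (key s₀ hs₀Ioi).mpr hs₀root⟩, ?_⟩, key⟩
  rintro y ⟨hy, hyeq⟩
  have hyroot : q y = 0 := (key y hy).mp hyeq
  exact hmono.injOn (Set.Ioi_subset_Ici_self hy) (Set.Ioi_subset_Ici_self hs₀Ioi) (by rw [hyroot, hs₀root])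
end

section
/- For 0 < b < a, the function h(s) = 2s − (1/s)√((s²−a²)(s²−b²)) defined on [a, +∞) is differentiable on (a, +∞), and for s > a its derivative vanishes if and only if 3s^8 − 4(a²+b²)s^6 + 6a²b²s^4 − a⁴b⁴ = 0. -/
theorem stmt_2 (a b : ℝ) (hb : 0 < b) (hba : b < a) :
    (∀ s ∈ Set.Ioi a, DifferentiableAt ℝ
        (fun s : ℝ => 2*s - (1/s) * Real.sqrt ((s^2-a^2)*(s^2-b^2))) s) ∧
    (∀ s ∈ Set.Ioi a,
      deriv (fun s : ℝ => 2*s - (1/s) * Real.sqrt ((s^2-a^2)*(s^2-b^2))) s = 0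
      ↔ 3*s^8 - 4*(a^2+b^2)*s^6 + 6*a^2*b^2*s^4 - a^4*b^4 = 0) := by
  have ha : 0 < a := hb.trans hba
  have key : ∀ s ∈ Set.Ioi a, HasDerivAt
      (fun s : ℝ => 2*s - (1/s) * Real.sqrt ((s^2-a^2)*(s^2-b^2)))
      (2*1 - ((-(s^2)⁻¹) * Real.sqrt ((s^2-a^2)*(s^2-b^2)) +
        (1/s) * ((2*s*(2*s^2-a^2-b^2)) / (2 * Real.sqrt ((s^2-a^2)*(s^2-b^2)))))) s := by
    intro s hs
    rw [Set.mem_Ioi] at hs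
    have hs0 : 0 < s := ha.trans hs
    have hPpos : 0 < (s^2-a^2)*(s^2-b^2) :=
      mul_pos (by nlinarith) (by nlinarith)
    have h1 : HasDerivAt (fun s : ℝ => (s^2-a^2)*(s^2-b^2)) (2*s*(2*s^2-a^2-b^2)) s := by
      have := (((hasDerivAt_pow 2 s).sub_const (a^2)).mul ((hasDerivAt_pow 2 s).sub_const (b^2)))
      refine this.congr_deriv ?_
      push_cast; ring
    have h2 := h1.sqrt (ne_of_gt hPpos)
    have h3 : HasDerivAt (fun s : ℝ => 1/s) (-(s^2)⁻¹) s := by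
      simpa [one_div] using hasDerivAt_inv hs0.ne'
    exact ((hasDerivAt_id s).const_mul 2).sub (h3.mul h2)
  constructor
  · intro s hs
    exact (key s hs).differentiableAt
  · intro s hs
    have hs' := hs
    rw [Set.mem_Ioi] at hs'
    have hs0 : 0 < s := ha.trans hs'
    have hPpos : 0 < (s^2-a^2)*(s^2-b^2) :=
      mul_pos (by nlinarith) (by nlinarith)
    rw [(key s hs).deriv]
    set r := Real.sqrt ((s^2-a^2)*(s^2-b^2)) with hrdef
    have hr : 0 < r := Real.sqrt_pos.mpr hPpos
    have hr2 : r^2 = (s^2-a^2)*(s^2-b^2) := Real.sq_sqrt hPpos.le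
    have ha2 : a^2 < s^2 := by nlinarith
    have hb2 : b^2 < s^2 := by nlinarith
    have hX : 0 < s^4 - a^2*b^2 := by nlinarith [mul_pos ha hb, sq_nonneg (s^2 - a*b)]
    have hfac : (2*1 - ((-(s^2)⁻¹) * r +
        (1/s) * ((2*s*(2*s^2-a^2-b^2)) / (2 * r)))) * (s^2*r)
        = 2*s^2*r - (s^4 - a^2*b^2) := by
      field_simp
      linear_combination hr2
    have hsr : s^2 * r ≠ 0 := by positivity
    constructor
    · intro hD
      have hk : 2*s^2*r = s^4 - a^2*b^2 := by
        rw [hD, zero_mul] at hfac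
        linarith
      linear_combination (-(4*s^4)) * hr2 + (2*s^2*r + (s^4 - a^2*b^2)) * hk
    · intro hpoly
      have hsq : (2*s^2*r - (s^4 - a^2*b^2)) * (2*s^2*r + (s^4 - a^2*b^2)) = 0 := by
        linear_combination hpoly + 4*s^4 * hr2
      have hk : 2*s^2*r = s^4 - a^2*b^2 := by
        rcases mul_eq_zero.mp hsq with h | h
        · linarith
        · nlinarith
      have : (2*1 - ((-(s^2)⁻¹) * r +
          (1/s) * ((2*s*(2*s^2-a^2-b^2)) / (2 * r)))) * (s^2*r) = 0 := by
        rw [hfac, hk]; ring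
      exact (mul_eq_zero.mp this).resolve_right hsr
end

section
/- The function K(ω, α, β) = (ω₁²−ω₂²+α₁−β₂)² + (2ω₁ω₂+α₂+β₁)² is a first integral of the system 2ω̇₁=ω₂ω₃+β₃, 2ω̇₂=−ω₁ω₃−α₃, ω̇₃=α₂−β₁, α̇₁=α₂ω₃−α₃ω₂, α̇₂=ω₁α₃−ω₃α₁, α̇₃=α₁ω₂−α₂ω₁, β̇₁=β₂ω₃−ω₂β₃, β̇₂=ω₁β₃−ω₃β₁, β̇₃=β₁ω₂−β₂ω₁; that is, the derivative of K along this vector field is identically zero on ℝ⁹. -/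
theorem stmt_3
    (w1 w2 w3 a1 a2 a3 b1 b2 b3 : ℝ → ℝ)
    (hw1 : ∀ t, HasDerivAt w1 ((w2 t * w3 t + b3 t) / 2) t)
    (hw2 : ∀ t, HasDerivAt w2 ((-(w1 t * w3 t) - a3 t) / 2) t)
    (hw3 : ∀ t, HasDerivAt w3 (a2 t - b1 t) t)
    (ha1 : ∀ t, HasDerivAt a1 (a2 t * w3 t - a3 t * w2 t) t)
    (ha2 : ∀ t, HasDerivAt a2 (w1 t * a3 t - w3 t * a1 t) t)
    (ha3 : ∀ t, HasDerivAt a3 (a1 t * w2 t - a2 t * w1 t) t)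
    (hb1 : ∀ t, HasDerivAt b1 (b2 t * w3 t - w2 t * b3 t) t)
    (hb2 : ∀ t, HasDerivAt b2 (w1 t * b3 t - w3 t * b1 t) t)
    (hb3 : ∀ t, HasDerivAt b3 (b1 t * w2 t - b2 t * w1 t) t) :
    ∀ t, HasDerivAt
      (fun t => ((w1 t)^2 - (w2 t)^2 + a1 t - b2 t)^2
              + (2 * w1 t * w2 t + a2 t + b1 t)^2) 0 t := by
  intro t
  have h1 := (((((hw1 t).pow 2).sub ((hw2 t).pow 2)).add (ha1 t)).sub (hb2 t)).pow 2
  have h2 := (((((hw1 t).const_mul 2).mul (hw2 t)).add (ha2 t)).add (hb1 t)).pow 2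
  have h := h1.add h2
  refine h.congr_deriv ?_
  simp only [Pi.add_apply, Pi.sub_apply, Pi.pow_apply, Pi.mul_apply]
  push_cast
  ring
end

section
/- Let a, b be real and define θ : ℝ → ℝ as a solution of the pendulum equation θ'' = −(a+b) sin θ. Then the curve t ↦ (ω, α, β) with ω = (0, 0, θ'(t)), α = a(cos θ(t), −sin θ(t), 0), β = b(sin θ(t), cos θ(t), 0) is a solution of the system 2ω̇₁=ω₂ω₃+β₃, 2ω̇₂=−ω₁ω₃−α₃, ω̇₃=α₂−β₁, α̇₁=α₂ω₃−α₃ω₂, α̇₂=ω₁α₃−ω₃α₁, α̇₃=α₁ω₂−α₂ω₁, β̇₁=β₂ω₃−ω₂β₃, β̇₂=ω₁β₃−ω₃β₁, β̇₃=β₁ω₂−β₂ω₁. -/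
theorem stmt_8 (a b : ℝ) (θ θ' : ℝ → ℝ)
    (hθ : ∀ t, HasDerivAt θ (θ' t) t)
    (hθ' : ∀ t, HasDerivAt θ' (-(a+b) * Real.sin (θ t)) t) :
    -- components: ω = (0,0,θ'), α = a(cos θ, −sin θ, 0), β = b(sin θ, cos θ, 0)
    (∀ t, HasDerivAt (fun _ : ℝ => (0:ℝ))
        (((0:ℝ) * (θ' t) + b * 0) / 2) t) ∧
    (∀ t, HasDerivAt (fun _ : ℝ => (0:ℝ))
        ((-(0 * θ' t) - a * 0) / 2) t) ∧
    (∀ t, HasDerivAt (fun t => θ' t)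
        ((-(a * Real.sin (θ t))) - b * Real.sin (θ t)) t) ∧
    (∀ t, HasDerivAt (fun t => a * Real.cos (θ t))
        ((-(a * Real.sin (θ t))) * θ' t - a * 0 * 0) t) ∧
    (∀ t, HasDerivAt (fun t => -(a * Real.sin (θ t)))
        (0 * (a * 0) - θ' t * (a * Real.cos (θ t))) t) ∧
    (∀ t, HasDerivAt (fun _ : ℝ => a * (0:ℝ))
        (a * Real.cos (θ t) * 0 - (-(a * Real.sin (θ t))) * 0) t) ∧
    (∀ t, HasDerivAt (fun t => b * Real.sin (θ t))
        (b * Real.cos (θ t) * θ' t - 0 * (b * 0)) t) ∧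
    (∀ t, HasDerivAt (fun t => b * Real.cos (θ t))
        (0 * (b * 0) - θ' t * (b * Real.sin (θ t))) t) ∧
    (∀ t, HasDerivAt (fun _ : ℝ => b * (0:ℝ))
        (b * Real.sin (θ t) * 0 - b * Real.cos (θ t) * 0) t) := by
  refine ⟨fun t => ?_, fun t => ?_, fun t => ?_, fun t => ?_, fun t => ?_,
    fun t => ?_, fun t => ?_, fun t => ?_, fun t => ?_⟩
  · simpa using hasDerivAt_const t (0:ℝ)
  · simpa using hasDerivAt_const t (0:ℝ)
  · have := hθ' t; convert this using 1; ring
  · have := ((Real.hasDerivAt_cos (θ t)).comp t (hθ t)).const_mul a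
    exact this.congr_deriv (by ring)
  · have := (((Real.hasDerivAt_sin (θ t)).comp t (hθ t)).const_mul a).neg
    exact this.congr_deriv (by ring)
  · simpa using hasDerivAt_const t (a*(0:ℝ))
  · have := ((Real.hasDerivAt_sin (θ t)).comp t (hθ t)).const_mul b
    exact this.congr_deriv (by ring)
  · have := ((Real.hasDerivAt_cos (θ t)).comp t (hθ t)).const_mul b
    exact this.congr_deriv (by ring)
  · simpa using hasDerivAt_const t (b*(0:ℝ))
end

section
/- Let F(ω, α, β) = ω₃(ω₁² + ω₂²) + 2(α₃ω₁ + β₃ω₂). Along the flow of the system 2ω̇₁=ω₂ω₃+β₃, 2ω̇₂=−ω₁ω₃−α₃, ω̇₃=α₂−β₁, α̇₁=α₂ω₃−α₃ω₂, α̇₂=ω₁α₃−ω₃α₁, α̇₃=α₁ω₂−α₂ω₁, β̇₁=β₂ω₃−ω₂β₃, β̇₂=ω₁β₃−ω₃β₁, β̇₃=β₁ω₂−β₂ω₁, the derivative of F vanishes at every point where ω₁²−ω₂²+α₁−β₂ = 0 and 2ω₁ω₂+α₂+β₁ = 0. -/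
theorem stmt_17
    (w1 w2 w3 a1 a2 a3 b1 b2 b3 : ℝ → ℝ)
    (hw1 : ∀ t, HasDerivAt w1 ((w2 t * w3 t + b3 t) / 2) t)
    (hw2 : ∀ t, HasDerivAt w2 ((-(w1 t * w3 t) - a3 t) / 2) t)
    (hw3 : ∀ t, HasDerivAt w3 (a2 t - b1 t) t)
    (ha1 : ∀ t, HasDerivAt a1 (a2 t * w3 t - a3 t * w2 t) t)
    (ha2 : ∀ t, HasDerivAt a2 (w1 t * a3 t - w3 t * a1 t) t)
    (ha3 : ∀ t, HasDerivAt a3 (a1 t * w2 t - a2 t * w1 t) t)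
    (hb1 : ∀ t, HasDerivAt b1 (b2 t * w3 t - w2 t * b3 t) t)
    (hb2 : ∀ t, HasDerivAt b2 (w1 t * b3 t - w3 t * b1 t) t)
    (hb3 : ∀ t, HasDerivAt b3 (b1 t * w2 t - b2 t * w1 t) t)
    (t : ℝ)
    (hc1 : (w1 t)^2 - (w2 t)^2 + a1 t - b2 t = 0)
    (hc2 : 2 * w1 t * w2 t + a2 t + b1 t = 0) :
    HasDerivAt
      (fun t => w3 t * ((w1 t)^2 + (w2 t)^2)
              + 2 * (a3 t * w1 t + b3 t * w2 t)) 0 t := by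
  have h := ((hw3 t).mul (((hw1 t).pow 2).add ((hw2 t).pow 2))).add
    ((((ha3 t).mul (hw1 t)).add ((hb3 t).mul (hw2 t))).const_mul 2)
  exact h.congr_deriv (by
    simp only [Pi.add_apply, Pi.pow_apply]
    linear_combination -((w1 t ^ 2 - w2 t ^ 2) * hc2 - 2 * w1 t * w2 t * hc1))
end

section
/- For 0 < b < a and s > a, define h(s) = 2s − (1/s)√((s²−a²)(s²−b²)), and let s₀ be the unique root in (a,∞) of 3s^8 − 4(a²+b²)s^6 + 6a²b²s^4 − a⁴b⁴ = 0. Then s₀ ≤ (2/√3)·a. -/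
theorem stmt_19 (a b : ℝ) (hb : 0 < b) (hba : b < a) (s₀ : ℝ)
    (hs₀ : s₀ ∈ Set.Ioi a ∧
      3*s₀^8 - 4*(a^2+b^2)*s₀^6 + 6*a^2*b^2*s₀^4 - a^4*b^4 = 0)
    (huniq : ∀ s ∈ Set.Ioi a,
      3*s^8 - 4*(a^2+b^2)*s^6 + 6*a^2*b^2*s^4 - a^4*b^4 = 0 → s = s₀) :
    s₀ ≤ (2 / Real.sqrt 3) * a := by
  by_contra hcon
  push_neg at hcon
  obtain ⟨hs, heq⟩ := hs₀
  simp only [Set.mem_Ioi] at hs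
  have ha : 0 < a := hb.trans hba
  have hs3 : (0:ℝ) < Real.sqrt 3 := by positivity
  have h2a : 2 * a < Real.sqrt 3 * s₀ := by
    have := (div_lt_iff₀ hs3).mp ((div_mul_eq_mul_div 2 (Real.sqrt 3) a ▸ hcon))
    linarith
  have hsq : 4 * a^2 < 3 * s₀^2 := by
    have h3 : Real.sqrt 3 ^ 2 = 3 := Real.sq_sqrt (by norm_num)
    nlinarith [mul_self_lt_mul_self (by linarith : (0:ℝ) ≤ 2 * a) h2a]
  have hab : b^2 < a^2 := by nlinarith
  have hs2 : 0 < s₀^2 := by nlinarith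
  have hq : 0 < 27*s₀^6 - 36*b^2*s₀^4 + 6*a^2*b^2*s₀^2 + 8*a^4*b^2 := by
    nlinarith [mul_pos (mul_pos hs2 hs2) (by nlinarith : (0:ℝ) < 3*s₀^2 - 4*b^2),
      mul_pos (mul_pos ha ha) (mul_pos hb hb), mul_pos (mul_pos (mul_pos ha ha) (mul_pos ha ha)) (mul_pos hb hb),
      mul_pos (mul_pos (mul_pos ha ha) (mul_pos hb hb)) hs2]
  have hprod : 0 < (3*s₀^2 - 4*a^2) * (27*s₀^6 - 36*b^2*s₀^4 + 6*a^2*b^2*s₀^2 + 8*a^4*b^2) :=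
    mul_pos (by linarith) hq
  have hrest : 0 < a^4*b^2*(32*a^2 - 27*b^2) := by
    have : 0 < 32*a^2 - 27*b^2 := by nlinarith
    positivity
  nlinarith [hprod, hrest, heq]
end
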